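/- If the bases B^{(1)},…,B^{(M)} are drawn i.i.d. from a distribution β on {X,Y,Z}^n, then E[INCONF_ε(P,B)] ≤ 2 Σ_{l=1}^L (1 − η ζ(P^{(l)},β))^M ≤ 2 Σ_{l=1}^L exp(−η ζ(P^{(l)},β) M), where η = 1 − exp(−ε²/2). -/

import Mathlib

/-- Single-qubit Pauli operators {I, X, Y, Z}. -/
inductive PauliOp : Type
  | I | X | Y | Z
deriving DecidableEq

instance : Fintype PauliOp :=
  ⟨{PauliOp.I, PauliOp.X, PauliOp.Y, PauliOp.Z}, by intro x; cases x <;> simp⟩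

/-- Single-qubit measurement bases 𝒫 = {X, Y, Z} (traceless Paulis). -/
inductive PauliBasis : Type
  | X | Y | Z
deriving DecidableEq

instance : Fintype PauliBasis :=
  ⟨{PauliBasis.X, PauliBasis.Y, PauliBasis.Z}, by intro x; cases x <;> simp⟩

instance : Inhabited PauliBasis := ⟨PauliBasis.X⟩

def PauliBasis.toPauli : PauliBasis → PauliOp
  | .X => .X
  | .Y => .Y
  | .Z => .Z

/-- The (non-identity) Pauli as a basis; junk value `X` on `I`. -/
def PauliOp.toBasis : PauliOp → PauliBasis
  | .I => .X
  | .X => .X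
  | .Y => .Y
  | .Z => .Z

/-- `Lift P`: measurement bases `B ∈ 𝒫^n` with `B_i = P_i` whenever `P_i ≠ I`. -/
def Lift {n : ℕ} (P : Fin n → PauliOp) : Finset (Fin n → PauliBasis) :=
  Finset.univ.filter fun B => ∀ i, P i ≠ PauliOp.I → (B i).toPauli = P i

/-- Support of a Pauli operator: qubits where it is not the identity. -/
def psupp {n : ℕ} (P : Fin n → PauliOp) : Finset (Fin n) :=
  Finset.univ.filter fun i => P i ≠ PauliOp.I

/-- ζ(P,β) = Σ_{B ∈ Lift(P)} β(B). -/
def zeta {n : ℕ} (P : Fin n → PauliOp) (β : (Fin n → PauliBasis) → ℝ) : ℝ :=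
  ∑ B ∈ Lift P, β B

lemma sum_prod_pow {S : Type*} [Fintype S] [DecidableEq S] (M : ℕ) (f : S → ℝ) :
    ∑ ω : Fin M → S, ∏ m, f (ω m) = (∑ B, f B) ^ M := by
  rw [← Fintype.piFinset_univ, ← Finset.prod_univ_sum]
  simp

/-- If the M bases are drawn i.i.d. from β, then (with η = 1 − exp(−ε²/2))
E[INCONF_ε(P,B)] ≤ 2 Σ_l (1 − η ζ(P^{(l)},β))^M ≤ 2 Σ_l exp(−η ζ(P^{(l)},β) M).
The expectation is over the product distribution on M-tuples of bases, and
INCONF is any function bounded by the multiplicative inconfidence bound. -/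
theorem statement13 {n : ℕ} (L M : ℕ) (P : Fin L → (Fin n → PauliOp))
    (β : (Fin n → PauliBasis) → ℝ)
    (hβ0 : ∀ B, 0 ≤ β B) (hβ1 : ∑ B, β B = 1)
    (ε : ℝ) (INCONF : (Fin M → (Fin n → PauliBasis)) → ℝ)
    (hbound : ∀ ω, INCONF ω ≤ 2 * ∑ l, ∏ m,
        (1 - (1 - Real.exp (-(ε ^ 2 / 2)))
          * (if ω m ∈ Lift (P l) then (1:ℝ) else 0))) :
    (∑ ω : Fin M → (Fin n → PauliBasis), (∏ m, β (ω m)) * INCONF ω)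
        ≤ 2 * ∑ l, (1 - (1 - Real.exp (-(ε ^ 2 / 2))) * zeta (P l) β) ^ M ∧
    2 * ∑ l, (1 - (1 - Real.exp (-(ε ^ 2 / 2))) * zeta (P l) β) ^ M
        ≤ 2 * ∑ l, Real.exp (-(1 - Real.exp (-(ε ^ 2 / 2))) * zeta (P l) β * M) := by
  set η := 1 - Real.exp (-(ε ^ 2 / 2)) with hη
  have hexp : Real.exp (-(ε ^ 2 / 2)) ≤ 1 :=
    Real.exp_le_one_iff.mpr (neg_nonpos.mpr (by positivity))
  have hη0 : 0 ≤ η := by rw [hη]; linarith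
  have hη1 : η ≤ 1 := by
    have := Real.exp_pos (-(ε ^ 2 / 2)); rw [hη]; linarith
  have hζ0 : ∀ l, 0 ≤ zeta (P l) β := fun l => Finset.sum_nonneg fun B _ => hβ0 B
  have hζ1 : ∀ l, zeta (P l) β ≤ 1 := by
    intro l
    rw [← hβ1]
    exact Finset.sum_le_sum_of_subset_of_nonneg (Finset.subset_univ _) fun B _ _ => hβ0 B
  have hB : ∀ l : Fin L, ∑ B : Fin n → PauliBasis,
      β B * (1 - η * (if B ∈ Lift (P l) then (1:ℝ) else 0)) = 1 - η * zeta (P l) β := by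
    intro l
    have h1 : ∀ B : Fin n → PauliBasis,
        β B * (1 - η * (if B ∈ Lift (P l) then (1:ℝ) else 0))
          = β B - η * (if B ∈ Lift (P l) then β B else 0) := by
      intro B; by_cases h : B ∈ Lift (P l) <;> simp [h] <;> ring
    simp_rw [h1, Finset.sum_sub_distrib, ← Finset.mul_sum, hβ1]
    congr 2
    rw [Finset.sum_ite_mem, Finset.univ_inter]
    rfl
  constructor
  · calc ∑ ω : Fin M → (Fin n → PauliBasis), (∏ m, β (ω m)) * INCONF ω
        ≤ ∑ ω : Fin M → (Fin n → PauliBasis), (∏ m, β (ω m)) *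
            (2 * ∑ l, ∏ m, (1 - η * (if ω m ∈ Lift (P l) then (1:ℝ) else 0))) := by
          refine Finset.sum_le_sum fun ω _ => ?_
          exact mul_le_mul_of_nonneg_left (hbound ω)
            (Finset.prod_nonneg fun m _ => hβ0 _)
      _ = 2 * ∑ l, (1 - η * zeta (P l) β) ^ M := by
          have h2 : ∀ ω : Fin M → (Fin n → PauliBasis),
              (∏ m, β (ω m)) * (2 * ∑ l, ∏ m, (1 - η * (if ω m ∈ Lift (P l) then (1:ℝ) else 0)))
              = 2 * ∑ l, ∏ m, (β (ω m) * (1 - η * (if ω m ∈ Lift (P l) then (1:ℝ) else 0))) := by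
            intro ω
            rw [mul_left_comm]
            congr 1
            rw [Finset.mul_sum]
            exact Finset.sum_congr rfl fun l _ => Finset.prod_mul_distrib.symm
          simp_rw [h2, ← Finset.mul_sum]
          congr 1
          rw [Finset.sum_comm]
          refine Finset.sum_congr rfl fun l _ => ?_
          have := sum_prod_pow M (fun B => β B * (1 - η * if B ∈ Lift (P l) then (1:ℝ) else 0))
          rw [this, hB l]
  · have h3 : ∀ l : Fin L, (1 - η * zeta (P l) β) ^ M
        ≤ Real.exp (-η * zeta (P l) β * M) := by
      intro l
      have hx0 : 0 ≤ η * zeta (P l) β := mul_nonneg hη0 (hζ0 l)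
      have hx1 : η * zeta (P l) β ≤ 1 := by
        calc η * zeta (P l) β ≤ 1 * 1 := by
              exact mul_le_mul hη1 (hζ1 l) (hζ0 l) zero_le_one
          _ = 1 := one_mul 1
      have hle : 1 - η * zeta (P l) β ≤ Real.exp (-(η * zeta (P l) β)) := by
        have := Real.add_one_le_exp (-(η * zeta (P l) β)); linarith
      calc (1 - η * zeta (P l) β) ^ M ≤ (Real.exp (-(η * zeta (P l) β))) ^ M :=
            pow_le_pow_left₀ (by linarith) hle M
        _ = Real.exp (-η * zeta (P l) β * M) := by
            rw [← Real.exp_nat_mul]; ring_nf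
    have := Finset.sum_le_sum fun l (_ : l ∈ Finset.univ) => h3 l
    linarith
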